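/- arXiv:1204.4959 — 2 statements merged into one kernel-verified Lean document; each statement's English description precedes it below -/
import Mathlib

section
/- Let X and Y be real normed vector spaces and let j : X → Y be an injective continuous linear map. Let K ⊆ X be a nonempty, convex, closed, bounded set which is compact in the weak topology of X. Let Φ : K → K be a map for which there exists q ∈ [0,1) such that ‖j(Φ(x)) − j(Φ(y))‖_Y ≤ q · ‖j(x) − j(y)‖_Y for all x, y ∈ K. Then Φ has exactly one fixed point in K. -/
open Set

/-- A variant of Banach's contraction principle: if `K` is a nonempty, convex, closed,
bounded subset of a real normed space `X` which is compact in the weak topology of `X`,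
`j : X → Y` is an injective continuous linear map, and `Φ : K → K` satisfies
`‖j(Φ x) - j(Φ y)‖ ≤ q ‖j x - j y‖` for some `q < 1`, then `Φ` has exactly one fixed
point in `K`. -/
theorem fixed_point_of_weakly_compact_contraction
    {X Y : Type*} [NormedAddCommGroup X] [NormedSpace ℝ X]
    [NormedAddCommGroup Y] [NormedSpace ℝ Y]
    (j : X →L[ℝ] Y) (hj : Function.Injective j)
    (K : Set X) (hne : K.Nonempty) (hconv : Convex ℝ K) (hclosed : IsClosed K)
    (hbdd : Bornology.IsBounded K)
    (hcpt : IsCompact ((toWeakSpace ℝ X) '' K))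
    (Φ : K → K) (q : ℝ) (hq0 : 0 ≤ q) (hq1 : q < 1)
    (hcontr : ∀ x y : K, ‖j (Φ x : X) - j (Φ y : X)‖ ≤ q * ‖j (x : X) - j (y : X)‖) :
    ∃! x : K, Φ x = x := by
  -- uniqueness is easy
  have uniq : ∀ x y : K, Φ x = x → Φ y = y → x = y := by
    intro x y hx hy
    have h := hcontr x y
    rw [hx, hy] at h
    have hz : ‖j (x : X) - j (y : X)‖ = 0 := by
      nlinarith [norm_nonneg (j (x : X) - j (y : X))]
    have : j (x : X) = j (y : X) := by
      rwa [← sub_eq_zero, ← norm_eq_zero]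
    exact Subtype.ext (hj this)
  -- the iterates
  obtain ⟨x₀, hx₀⟩ := hne
  set u : ℕ → K := fun n => Φ^[n] ⟨x₀, hx₀⟩ with hu
  have hustep : ∀ n, u (n + 1) = Φ (u n) := by
    intro n; simp [hu, Function.iterate_succ_apply']
  -- geometric bound
  set C : ℝ := ‖j (u 1 : X) - j (u 0 : X)‖ with hC
  have hgeom : ∀ n, ‖j (u (n + 1) : X) - j (u n : X)‖ ≤ C * q ^ n := by
    intro n
    induction n with
    | zero => simp [hC]
    | succ n ih =>
      have h := hcontr (u (n + 1)) (u n)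
      rw [← hustep (n+1), ← hustep n] at h
      calc ‖j (u (n + 2) : X) - j (u (n + 1) : X)‖ ≤ q * ‖j (u (n+1) : X) - j (u n : X)‖ := h
        _ ≤ q * (C * q ^ n) := by
            exact mul_le_mul_of_nonneg_left ih hq0
        _ = C * q ^ (n + 1) := by ring
  -- Cauchy sequence in Y
  have hcauchy : CauchySeq (fun n => j (u n : X)) := by
    apply cauchySeq_of_le_geometric q C hq1
    intro n
    rw [dist_eq_norm, norm_sub_rev]
    exact hgeom n
  -- weak cluster point
  set w : ℕ → WeakSpace ℝ X := fun n => toWeakSpace ℝ X (u n : X) with hw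
  have hmaps : Filter.map w Filter.atTop ≤ Filter.principal ((toWeakSpace ℝ X) '' K) :=
    Filter.le_principal_iff.mpr (Filter.mem_map.mpr
      (Filter.Eventually.of_forall (fun n => ⟨(u n : X), (u n).2, rfl⟩)))
  obtain ⟨x', hx'K, hx'⟩ := hcpt.exists_clusterPt hmaps
  obtain ⟨x, hxK, rfl⟩ := hx'K
  -- j (u n) → j x in norm
  have htend : Filter.Tendsto (fun n => j (u n : X)) Filter.atTop (nhds (j x)) := by
    rw [Metric.tendsto_atTop]
    intro ε hε
    obtain ⟨N, hN⟩ := Metric.cauchySeq_iff.mp hcauchy (ε / 3) (by linarith)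
    refine ⟨N, fun n hn => ?_⟩
    rw [dist_eq_norm]
    by_cases hz : j (u n : X) - j x = 0
    · rw [hz, norm_zero]; linarith
    obtain ⟨g, hg1, hgz⟩ := exists_dual_vector ℝ (j (u n : X) - j x) (norm_ne_zero_iff.mpr hz)
    -- g ∘ j is weakly continuous
    let f' : WeakSpace ℝ X →L[ℝ] ℝ :=
      { toLinearMap := ((g.comp j : X →L[ℝ] ℝ) : X →ₗ[ℝ] ℝ).comp
          ((toWeakSpace ℝ X).symm : WeakSpace ℝ X →ₗ[ℝ] X)
        cont := WeakBilin.eval_continuous (topDualPairing ℝ X).flip (g.comp j) }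
    have hclus : MapClusterPt (g (j x)) Filter.atTop (fun n => g (j (u n : X))) := by
      have h0 : MapClusterPt (toWeakSpace ℝ X x) Filter.atTop w := hx'
      have h1 := h0.continuousAt_comp (map_continuous f').continuousAt
      have e1 : f' (toWeakSpace ℝ X x) = g (j x) := by
        simp [f']
      have e2 : f' ∘ w = fun n => g (j (u n : X)) := by
        funext n; simp [f', hw]
      rwa [e1, e2] at h1
    have hfreq := mapClusterPt_iff_frequently.mp hclus (Metric.ball ((g.comp j) x) (ε / 3))
      (Metric.ball_mem_nhds _ (by linarith))
    obtain ⟨m, hm, hmball⟩ := Filter.frequently_atTop.mp (hfreq) N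
    have h1 : ‖j (u n : X) - j (u m : X)‖ < ε / 3 := by
      have := hN n hn m hm; rwa [dist_eq_norm] at this
    have h2 : |g (j (u m : X)) - g (j x)| < ε / 3 := by
      have := hmball
      simpa [Metric.mem_ball, Real.dist_eq] using this
    have key : ‖j (u n : X) - j x‖ = g (j (u n : X) - j x) := hgz.symm
    have expand : g (j (u n : X) - j x)
        = g (j (u n : X) - j (u m : X)) + (g (j (u m : X)) - g (j x)) := by
      rw [map_sub, map_sub]; ring
    have hb : g (j (u n : X) - j (u m : X)) ≤ ‖j (u n : X) - j (u m : X)‖ := by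
      calc g (j (u n : X) - j (u m : X)) ≤ ‖g (j (u n : X) - j (u m : X))‖ := le_abs_self _
        _ ≤ ‖g‖ * ‖j (u n : X) - j (u m : X)‖ := g.le_opNorm _
        _ = ‖j (u n : X) - j (u m : X)‖ := by rw [hg1, one_mul]
    rw [key, expand]
    calc g (j (u n : X) - j (u m : X)) + (g (j (u m : X)) - g (j x))
        ≤ ‖j (u n : X) - j (u m : X)‖ + |g (j (u m : X)) - g (j x)| :=
          add_le_add hb (le_abs_self _)
      _ < ε / 3 + ε / 3 := add_lt_add h1 h2
      _ < ε := by linarith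
  -- x is a fixed point
  have hfix : Φ ⟨x, hxK⟩ = ⟨x, hxK⟩ := by
    have htend' : Filter.Tendsto (fun n => j (u (n + 1) : X)) Filter.atTop (nhds (j x)) :=
      htend.comp (Filter.tendsto_add_atTop_nat 1)
    have htendΦ : Filter.Tendsto (fun n => j (u (n + 1) : X)) Filter.atTop
        (nhds (j (Φ ⟨x, hxK⟩ : X))) := by
      rw [tendsto_iff_norm_sub_tendsto_zero]
      have hb : ∀ n, ‖j (u (n+1) : X) - j (Φ ⟨x, hxK⟩ : X)‖ ≤ q * ‖j (u n : X) - j x‖ := by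
        intro n; rw [hustep n]; exact hcontr (u n) ⟨x, hxK⟩
      have h0 : Filter.Tendsto (fun n => q * ‖j (u n : X) - j x‖) Filter.atTop (nhds 0) := by
        have := (tendsto_iff_norm_sub_tendsto_zero.mp htend).const_mul q
        simpa using this
      exact squeeze_zero (fun n => norm_nonneg _) hb h0
    have := tendsto_nhds_unique htendΦ htend'
    exact Subtype.ext (hj this)
  exact ⟨⟨x, hxK⟩, hfix, fun y hy => uniq y ⟨x, hxK⟩ hy hfix⟩
end

section
/- Let F : [0,∞) → ℝ be differentiable and nonnegative, let G : [0,∞) → ℝ be continuous and nonnegative, and let C > 0, M₁ > 0, δ₀ > 0 be constants with C·M₁·(δ₀ + δ₀² + δ₀³) < 1/2. Assume F′(t) + (1 − C·M₁·(F(t) + F(t)² + F(t)³))·G(t) ≤ 0 for all t ≥ 0 and F(0) < δ₀. Then for every t ≥ 0 one has F(t) + (1/2)·∫₀ᵗ G(s) ds ≤ F(0) < δ₀. -/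
open Set intervalIntegral

/-- Integrated energy bound: under the hypotheses of the barrier argument, for every `t ≥ 0`
one has `F(t) + (1/2)·∫₀ᵗ G(s) ds ≤ F(0) < δ₀`. -/
theorem integrated_energy_bound
    (F F' G : ℝ → ℝ) (C M₁ δ₀ : ℝ)
    (hC : 0 < C) (hM₁ : 0 < M₁) (hδ₀ : 0 < δ₀)
    (hsmall : C * M₁ * (δ₀ + δ₀ ^ 2 + δ₀ ^ 3) < 1 / 2)
    (hF : ∀ t ∈ Ici (0 : ℝ), HasDerivWithinAt F (F' t) (Ici (0 : ℝ)) t)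
    (hFpos : ∀ t ∈ Ici (0 : ℝ), 0 ≤ F t)
    (hG : ContinuousOn G (Ici (0 : ℝ)))
    (hGpos : ∀ t ∈ Ici (0 : ℝ), 0 ≤ G t)
    (hineq : ∀ t ∈ Ici (0 : ℝ),
      F' t + (1 - C * M₁ * (F t + F t ^ 2 + F t ^ 3)) * G t ≤ 0)
    (h0 : F 0 < δ₀) :
    ∀ t ∈ Ici (0 : ℝ),
      F t + (1 / 2) * (∫ s in (0 : ℝ)..t, G s) ≤ F 0 ∧ F 0 < δ₀ := by
  have hFcont : ContinuousOn F (Ici (0 : ℝ)) := fun t ht => (hF t ht).continuousWithinAt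
  -- pointwise derivative bound whenever `F t ≤ δ₀`
  have key : ∀ t ∈ Ici (0 : ℝ), F t ≤ δ₀ → F' t + (1 / 2) * G t ≤ 0 := by
    intro t ht hle
    have h1 := hineq t ht
    have hFt := hFpos t ht
    have hGt := hGpos t ht
    have hmono : F t + F t ^ 2 + F t ^ 3 ≤ δ₀ + δ₀ ^ 2 + δ₀ ^ 3 := by
      have h2 := pow_le_pow_left₀ hFt hle 2
      have h3 := pow_le_pow_left₀ hFt hle 3
      linarith
    have hc : C * M₁ * (F t + F t ^ 2 + F t ^ 3) ≤ C * M₁ * (δ₀ + δ₀ ^ 2 + δ₀ ^ 3) :=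
      mul_le_mul_of_nonneg_left hmono (by positivity)
    have hclt : C * M₁ * (F t + F t ^ 2 + F t ^ 3) < 1 / 2 := hc.trans_lt hsmall
    nlinarith [mul_nonneg (by linarith : (0:ℝ) ≤ 1 / 2 - C * M₁ * (F t + F t ^ 2 + F t ^ 3)) hGt]
  -- barrier: `F t < δ₀` for all `t ≥ 0`
  have barrier : ∀ t ∈ Ici (0 : ℝ), F t < δ₀ := by
    by_contra hcon
    push_neg at hcon
    obtain ⟨t₀, ht₀, hδt₀⟩ := hcon
    set T : Set ℝ := Ici 0 ∩ F ⁻¹' Ici δ₀ with hT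
    have hTclosed : IsClosed T :=
      hFcont.preimage_isClosed_of_isClosed isClosed_Ici isClosed_Ici
    have hTne : T.Nonempty := ⟨t₀, ht₀, hδt₀⟩
    have hTbdd : BddBelow T := ⟨0, fun x hx => hx.1⟩
    set t' := sInf T with ht'
    have ht'mem : t' ∈ T := hTclosed.csInf_mem hTne hTbdd
    have ht'pos : 0 ≤ t' := ht'mem.1
    have hlt : ∀ x, 0 ≤ x → x < t' → F x < δ₀ := by
      intro x hx hxt
      by_contra h
      push_neg at h
      exact absurd (csInf_le hTbdd ⟨hx, h⟩) (not_le.mpr hxt)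
    have hanti : AntitoneOn F (Icc 0 t') := by
      apply antitoneOn_of_deriv_nonpos (convex_Icc _ _) (hFcont.mono Icc_subset_Ici_self)
      · intro x hx
        rw [interior_Icc] at hx
        exact (((hF x hx.1.le).hasDerivAt (Ici_mem_nhds hx.1)).differentiableAt).differentiableWithinAt
      · intro x hx
        rw [interior_Icc] at hx
        have hd := (hF x hx.1.le).hasDerivAt (Ici_mem_nhds hx.1)
        rw [hd.deriv]
        have hxlt : F x < δ₀ := hlt x hx.1.le hx.2
        have h2 := key x hx.1.le hxlt.le
        have h3 := hGpos x hx.1.le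
        linarith
    have := hanti (left_mem_Icc.mpr ht'pos) (right_mem_Icc.mpr ht'pos) ht'pos
    have := ht'mem.2
    simp only [mem_Ici, mem_preimage] at this
    linarith
  -- main argument
  intro t ht
  refine ⟨?_, h0⟩
  set φ : ℝ → ℝ := fun u => F u + (1 / 2) * ∫ s in (0 : ℝ)..u, G s with hφ
  have hGint : MeasureTheory.IntegrableOn G (uIcc (0 : ℝ) t) :=
    (hG.mono (by rw [uIcc_of_le ht]; exact Icc_subset_Ici_self)).integrableOn_compact
      isCompact_uIcc
  have hφcont : ContinuousOn φ (Icc 0 t) := by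
    apply ((hFcont.mono Icc_subset_Ici_self).add (ContinuousOn.const_smul ?_ (1/2 : ℝ)))
    have := continuousOn_primitive_interval (μ := MeasureTheory.volume) (f := G) (a := 0)
      (b := t) hGint
    rwa [uIcc_of_le ht] at this
  have hφanti : AntitoneOn φ (Icc 0 t) := by
    have hderiv : ∀ x ∈ Ioo (0:ℝ) t, HasDerivAt φ (F' x + (1 / 2) * G x) x := by
      intro x hx
      have hFd : HasDerivAt F (F' x) x := (hF x hx.1.le).hasDerivAt (Ici_mem_nhds hx.1)
      have hint : IntervalIntegrable G MeasureTheory.volume 0 x := by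
        apply ContinuousOn.intervalIntegrable
        refine hG.mono ?_
        rw [uIcc_of_le hx.1.le]
        exact Icc_subset_Ici_self
      have hmeas : StronglyMeasurableAtFilter G (nhds x) :=
        ⟨Ici 0, Ici_mem_nhds hx.1, hG.aestronglyMeasurable measurableSet_Ici⟩
      have hcx : ContinuousAt G x := (hG.continuousAt (Ici_mem_nhds hx.1))
      have hI : HasDerivAt (fun u => ∫ s in (0:ℝ)..u, G s) (G x) x :=
        integral_hasDerivAt_right hint hmeas hcx
      exact hFd.add (hI.const_mul (1 / 2))
    apply antitoneOn_of_deriv_nonpos (convex_Icc _ _) hφcont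
    · intro x hx
      rw [interior_Icc] at hx
      exact (hderiv x hx).differentiableAt.differentiableWithinAt
    · intro x hx
      rw [interior_Icc] at hx
      rw [(hderiv x hx).deriv]
      exact key x hx.1.le (barrier x hx.1.le).le
  have hle : φ t ≤ φ 0 := hφanti (left_mem_Icc.mpr ht) (right_mem_Icc.mpr ht) ht
  simp only [hφ, integral_same, mul_zero, add_zero] at hle
  exact hle
end
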